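/- Let G be a (C₄, H)-dumbbell, i.e. an (H₁,H₂)-dumbbell whose plate H₁ is isomorphic to the 4-cycle and whose other plate is H. If H admits a (2k+1, k)-configuration for some k ≥ 3, then G admits a (2k+1, k)-configuration. -/

import Mathlib

open SimpleGraph

/-- A set of vertices `D` is dominating in `G` if every vertex not in `D`
has a neighbour in `D`. -/
def Dominating {V : Type*} (G : SimpleGraph V) (D : Finset V) : Prop :=
  ∀ v : V, v ∉ D → ∃ u ∈ D, G.Adj v u

/-- A `(k,s)`-configuration of `G`: a multiset of `k` dominating sets of `G`
such that every vertex belongs to at most `s` of them. -/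
def IsConfig {V : Type*} [DecidableEq V] (G : SimpleGraph V)
    (𝒟 : Multiset (Finset V)) (k s : ℕ) : Prop :=
  Multiset.card 𝒟 = k ∧ (∀ D ∈ 𝒟, Dominating G D) ∧
    ∀ v : V, 𝒟.countP (fun D => v ∈ D) ≤ s

/-- `G` is an `(H₁,H₂)`-dumbbell with plates the subgraphs `H₁` and `H₂`:
the plates have at most one vertex in common, and `G` is the union of `H₁`, `H₂` and
a path `P` (the handle, with at least one vertex) that is binary in `G` (all its
internal vertices have degree 2 in `G`), where each plate meets `P` in exactly one
vertex, which is an end-vertex of `P`, and the plates are vertex disjoint whenever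
`P` has at least two vertices. -/
def IsDumbbell {V : Type*} (G : SimpleGraph V) (H₁ H₂ : G.Subgraph) : Prop :=
  (H₁.verts ∩ H₂.verts).Subsingleton ∧
  ∃ (x y : V) (P : G.Walk x y),
    P.IsPath ∧
    (∀ v ∈ P.support, v ≠ x → v ≠ y → (G.neighborSet v).ncard = 2) ∧
    H₁ ⊔ H₂ ⊔ P.toSubgraph = ⊤ ∧
    H₁.verts ∩ {v | v ∈ P.support} = {x} ∧
    H₂.verts ∩ {v | v ∈ P.support} = {y} ∧
    (x ≠ y → Disjoint H₁.verts H₂.verts)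

open List

section Helpers

variable {V : Type*} [DecidableEq V]

private lemma mem_zipWith_union {S : Finset V} {ts ds : List (Finset V)}
    (h : S ∈ List.zipWith (· ∪ ·) ts ds) : ∃ T ∈ ts, ∃ D ∈ ds, S = T ∪ D := by
  induction ts generalizing ds with
  | nil => simp at h
  | cons T ts ih =>
    cases ds with
    | nil => simp at h
    | cons D ds =>
      simp only [List.zipWith_cons_cons, List.mem_cons] at h
      rcases h with h | h
      · exact ⟨T, by simp, D, by simp, h⟩
      · obtain ⟨T', hT', D', hD', hS⟩ := ih h
        exact ⟨T', by simp [hT'], D', by simp [hD'], hS⟩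

private lemma countP_zipWith_union_le (v : V) (ts ds : List (Finset V)) :
    (List.zipWith (· ∪ ·) ts ds).countP (fun S => v ∈ S)
      ≤ ts.countP (fun S => v ∈ S) + ds.countP (fun S => v ∈ S) := by
  induction ts generalizing ds with
  | nil => simp
  | cons T ts ih =>
    cases ds with
    | nil => simp
    | cons D ds =>
      simp only [List.zipWith_cons_cons, List.countP_cons]
      have := ih ds
      by_cases hT : v ∈ T <;> by_cases hD : v ∈ D <;>
        simp [hT, hD, Finset.mem_union] <;> omega

private lemma countP_zipWith_union_le_of_drop (v : V) (kk : ℕ) (ts ds : List (Finset V))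
    (h1 : ∀ T ∈ ts.drop kk, v ∉ T) (h2 : ∀ D ∈ ds.drop kk, v ∉ D) :
    (List.zipWith (· ∪ ·) ts ds).countP (fun S => v ∈ S) ≤ kk := by
  set l := List.zipWith (· ∪ ·) ts ds with hl
  rw [← List.take_append_drop kk l, List.countP_append]
  have hb : (l.take kk).countP (fun S => decide (v ∈ S)) ≤ kk :=
    le_trans List.countP_le_length (by simp)
  have hz : (l.drop kk).countP (fun S => decide (v ∈ S)) = 0 := by
    rw [List.countP_eq_zero]
    intro S hS
    rw [hl, List.drop_zipWith] at hS
    obtain ⟨T, hT, D, hD, rfl⟩ := mem_zipWith_union hS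
    simp only [decide_eq_true_eq, Finset.mem_union]
    rintro (h | h)
    · exact h1 T hT h
    · exact h2 D hD h
  omega

private lemma countP_replicate' (pr : Finset V → Bool) (n : ℕ) (T : Finset V) :
    (List.replicate n T).countP pr = if pr T then n else 0 := by
  induction n with
  | zero => simp
  | succ n ih => rw [List.replicate_succ, List.countP_cons, ih]; by_cases h : pr T <;> simp [h]

private lemma aux_construct (G : SimpleGraph V) (k : ℕ) (hk : 3 ≤ k)
    (W : Set V) (𝒟 : Multiset (Finset V))
    (hcard : Multiset.card 𝒟 = 2 * k + 1)
    (hdomW : ∀ D ∈ 𝒟, ∀ v ∈ W, v ∉ D → ∃ u ∈ D, G.Adj v u)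
    (hsubW : ∀ D ∈ 𝒟, ∀ v ∈ D, v ∈ W)
    (hcnt : ∀ v : V, 𝒟.countP (fun D => v ∈ D) ≤ k)
    (m : ℕ) (p : ℕ → V) (a b c : V)
    (hcover : ∀ v : V, v ∈ W ∨ v = a ∨ v = b ∨ v = c ∨ ∃ j ≤ m, v = p j)
    (hxa : G.Adj (p 0) a) (hab : G.Adj a b) (hbc : G.Adj b c) (hcx : G.Adj c (p 0))
    (hadj : ∀ j, j < m → G.Adj (p j) (p (j + 1)))
    (pinj : ∀ i ≤ m, ∀ j ≤ m, p i = p j → i = j)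
    (haW : a ∉ W) (hbW : b ∉ W) (hcW : c ∉ W)
    (hpW : ∀ j < m, p j ∉ W) (hym : p m ∈ W)
    (hap : ∀ j ≤ m, a ≠ p j) (hbp : ∀ j ≤ m, b ≠ p j) (hcp : ∀ j ≤ m, c ≠ p j)
    (hab2 : a ≠ b) (hac2 : a ≠ c) (hbc2 : b ≠ c) :
    ∃ 𝒟' : Multiset (Finset V), IsConfig G 𝒟' (2 * k + 1) k := by
  classical
  obtain ⟨A, hA⟩ : ∃ A : ℕ → Finset V,
      A = fun r => ((Finset.range m).filter (fun j => j % 3 = r)).image p := ⟨_, rfl⟩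
  obtain ⟨Y, hY⟩ : ∃ Y : ℕ → Finset V,
      Y = fun r => if m % 3 = r then ({p m} : Finset V) else ∅ := ⟨_, rfl⟩
  obtain ⟨T1, hT1⟩ : ∃ T : Finset V, T = insert a (A 0 ∪ Y 0) := ⟨_, rfl⟩
  obtain ⟨T1', hT1'⟩ : ∃ T : Finset V, T = insert c (A 0 ∪ Y 0) := ⟨_, rfl⟩
  obtain ⟨T2, hT2⟩ : ∃ T : Finset V, T = insert b (A 1 ∪ Y 1) := ⟨_, rfl⟩
  obtain ⟨T3, hT3⟩ : ∃ T : Finset V, T = insert a (insert c (A 2 ∪ Y 2)) := ⟨_, rfl⟩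
  obtain ⟨ts0, hts0⟩ : ∃ l : List (Finset V), l = [T1, T1'] := ⟨_, rfl⟩
  obtain ⟨ts1, hts1⟩ : ∃ l : List (Finset V), l = List.replicate k T2 := ⟨_, rfl⟩
  obtain ⟨ts2, hts2⟩ : ∃ l : List (Finset V), l = List.replicate (k - 1) T3 := ⟨_, rfl⟩
  obtain ⟨ts, hts⟩ : ∃ l : List (Finset V),
      l = if m % 3 = 0 then ts0 ++ (ts1 ++ ts2)
          else if m % 3 = 1 then ts1 ++ (ts0 ++ ts2) else ts2 ++ (ts0 ++ ts1) := ⟨_, rfl⟩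
  obtain ⟨dsY, hdsY⟩ : ∃ l : List (Finset V),
      l = (𝒟.filter (fun D => p m ∈ D)).toList := ⟨_, rfl⟩
  obtain ⟨dsN, hdsN⟩ : ∃ l : List (Finset V),
      l = (𝒟.filter (fun D => p m ∉ D)).toList := ⟨_, rfl⟩
  obtain ⟨ds, hds⟩ : ∃ l : List (Finset V), l = dsY ++ dsN := ⟨_, rfl⟩
  -- basic length facts
  have hts0len : ts0.length = 2 := by rw [hts0]; rfl
  have hts1len : ts1.length = k := by rw [hts1]; simp
  have hts2len : ts2.length = k - 1 := by rw [hts2]; simp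
  have htslen : ts.length = 2 * k + 1 := by
    rw [hts]; split_ifs <;> simp [hts0len, hts1len, hts2len] <;> omega
  have hdsYlen : dsY.length = Multiset.countP (fun D => p m ∈ D) 𝒟 := by
    rw [hdsY, Multiset.length_toList, Multiset.countP_eq_card_filter]
  have hdslen : ds.length = 2 * k + 1 := by
    rw [hds, List.length_append, hdsY, hdsN, Multiset.length_toList, Multiset.length_toList,
      ← Multiset.card_add, Multiset.filter_add_not, hcard]
  -- membership facts about ts and ds
  have hts_mem : ∀ T ∈ ts, T = T1 ∨ T = T1' ∨ T = T2 ∨ T = T3 := by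
    intro T hT
    rw [hts] at hT
    split_ifs at hT <;>
      simp only [hts0, hts1, hts2, List.mem_append, List.mem_cons, List.mem_replicate,
        List.mem_singleton, List.not_mem_nil, or_false] at hT <;> tauto
  have hds_mem : ∀ D ∈ ds, D ∈ 𝒟 := by
    intro D hD
    rw [hds, List.mem_append, hdsY, hdsN] at hD
    rcases hD with h | h <;> rw [Multiset.mem_toList] at h <;>
      exact (Multiset.mem_filter.mp h).1
  -- membership facts about A and Y
  have hA_mem : ∀ r j, j < m → j % 3 = r → p j ∈ A r := by
    intro r j hj hr
    rw [hA]
    exact Finset.mem_image.mpr ⟨j, Finset.mem_filter.mpr ⟨Finset.mem_range.mpr hj, hr⟩, rfl⟩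
  have hA_elim : ∀ r v, v ∈ A r → ∃ j, j < m ∧ j % 3 = r ∧ p j = v := by
    intro r v hv
    rw [hA] at hv
    obtain ⟨j, hj, rfl⟩ := Finset.mem_image.mp hv
    obtain ⟨h1, h2⟩ := Finset.mem_filter.mp hj
    exact ⟨j, Finset.mem_range.mp h1, h2, rfl⟩
  have hY_elim : ∀ r v, v ∈ Y r → m % 3 = r ∧ v = p m := by
    intro r v hv
    simp only [hY] at hv
    split_ifs at hv with h
    · exact ⟨h, Finset.mem_singleton.mp hv⟩
    · simp at hv
  have hx0 : p 0 ∈ A 0 ∪ Y 0 := by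
    rcases Nat.eq_zero_or_pos m with hm | hm
    · refine Finset.mem_union_right _ ?_
      simp [hY, hm]
    · exact Finset.mem_union_left _ (hA_mem 0 0 hm rfl)
  have path_claim : ∀ r, r < 3 → ∀ j, j < m → ¬(r = 2 ∧ j = 0) →
      ∃ u ∈ A r ∪ Y r, u = p j ∨ G.Adj (p j) u := by
    intro r hr j hj hne
    have h3 : j % 3 = r ∨ (j + 1) % 3 = r ∨ (1 ≤ j ∧ (j - 1) % 3 = r) := by omega
    rcases h3 with h | h | ⟨h1, h⟩
    · exact ⟨p j, Finset.mem_union_left _ (hA_mem r j hj h), Or.inl rfl⟩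
    · refine ⟨p (j + 1), ?_, Or.inr (hadj j hj)⟩
      by_cases hjm : j + 1 < m
      · exact Finset.mem_union_left _ (hA_mem r (j + 1) hjm h)
      · have hm : j + 1 = m := by omega
        refine Finset.mem_union_right _ ?_
        have hmr : m % 3 = r := by omega
        rw [hm]
        simp [hY, hmr]
    · refine ⟨p (j - 1), Finset.mem_union_left _ (hA_mem r (j - 1) (by omega) h), Or.inr ?_⟩
      have h2 := hadj (j - 1) (by omega)
      rw [show j - 1 + 1 = j from by omega] at h2
      exact h2.symm
  -- domination within the non-W region
  have dom_claim : ∀ T ∈ ts, ∀ v, (v = a ∨ v = b ∨ v = c ∨ ∃ j, j < m ∧ v = p j) →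
      v ∈ T ∨ ∃ u ∈ T, G.Adj v u := by
    intro T hT v hv
    rcases hts_mem T hT with rfl | rfl | rfl | rfl
    · rcases hv with rfl | rfl | rfl | ⟨j, hj, rfl⟩
      · exact Or.inl (by rw [hT1]; exact Finset.mem_insert_self _ _)
      · exact Or.inr ⟨a, by rw [hT1]; exact Finset.mem_insert_self _ _, hab.symm⟩
      · exact Or.inr ⟨p 0, by rw [hT1]; exact Finset.mem_insert_of_mem hx0, hcx⟩
      · obtain ⟨u, hu, h⟩ := path_claim 0 (by omega) j hj (by simp)
        rcases h with rfl | h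
        · exact Or.inl (by rw [hT1]; exact Finset.mem_insert_of_mem hu)
        · exact Or.inr ⟨u, by rw [hT1]; exact Finset.mem_insert_of_mem hu, h⟩
    · rcases hv with rfl | rfl | rfl | ⟨j, hj, rfl⟩
      · exact Or.inr ⟨p 0, by rw [hT1']; exact Finset.mem_insert_of_mem hx0, hxa.symm⟩
      · exact Or.inr ⟨c, by rw [hT1']; exact Finset.mem_insert_self _ _, hbc⟩
      · exact Or.inl (by rw [hT1']; exact Finset.mem_insert_self _ _)
      · obtain ⟨u, hu, h⟩ := path_claim 0 (by omega) j hj (by simp)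
        rcases h with rfl | h
        · exact Or.inl (by rw [hT1']; exact Finset.mem_insert_of_mem hu)
        · exact Or.inr ⟨u, by rw [hT1']; exact Finset.mem_insert_of_mem hu, h⟩
    · rcases hv with rfl | rfl | rfl | ⟨j, hj, rfl⟩
      · exact Or.inr ⟨b, by rw [hT2]; exact Finset.mem_insert_self _ _, hab⟩
      · exact Or.inl (by rw [hT2]; exact Finset.mem_insert_self _ _)
      · exact Or.inr ⟨b, by rw [hT2]; exact Finset.mem_insert_self _ _, hbc.symm⟩
      · obtain ⟨u, hu, h⟩ := path_claim 1 (by omega) j hj (by simp)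
        rcases h with rfl | h
        · exact Or.inl (by rw [hT2]; exact Finset.mem_insert_of_mem hu)
        · exact Or.inr ⟨u, by rw [hT2]; exact Finset.mem_insert_of_mem hu, h⟩
    · rcases hv with rfl | rfl | rfl | ⟨j, hj, rfl⟩
      · exact Or.inl (by rw [hT3]; exact Finset.mem_insert_self _ _)
      · exact Or.inr ⟨a, by rw [hT3]; exact Finset.mem_insert_self _ _, hab.symm⟩
      · exact Or.inl (by rw [hT3]; exact Finset.mem_insert_of_mem (Finset.mem_insert_self _ _))
      · by_cases hj0 : j = 0
        · subst hj0
          exact Or.inr ⟨a, by rw [hT3]; exact Finset.mem_insert_self _ _, hxa⟩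
        · obtain ⟨u, hu, h⟩ := path_claim 2 (by omega) j hj (by simp [hj0])
          rcases h with rfl | h
          · refine Or.inl ?_
            rw [hT3]
            exact Finset.mem_insert_of_mem (Finset.mem_insert_of_mem hu)
          · refine Or.inr ⟨u, ?_, h⟩
            rw [hT3]
            exact Finset.mem_insert_of_mem (Finset.mem_insert_of_mem hu)
  -- non-membership facts
  have hpm_notA : ∀ r, p m ∉ A r := by
    intro r h
    obtain ⟨j, hj, _, hpj⟩ := hA_elim r _ h
    have := pinj j (by omega) m le_rfl hpj
    omega
  have hpj_A_iff : ∀ r j, j < m → (p j ∈ A r ↔ j % 3 = r) := by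
    intro r j hj
    constructor
    · intro h
      obtain ⟨j', hj', hr', hpj⟩ := hA_elim r _ h
      have := pinj j' (by omega) j (by omega) hpj
      omega
    · exact hA_mem r j hj
  have hpj_notY : ∀ r j, j < m → p j ∉ Y r := by
    intro r j hj h
    obtain ⟨_, h2⟩ := hY_elim r _ h
    have := pinj j (by omega) m le_rfl h2
    omega
  have ha_notAY : ∀ r, a ∉ A r ∪ Y r := by
    intro r h
    rcases Finset.mem_union.mp h with h | h
    · obtain ⟨j, hj, _, hpj⟩ := hA_elim r _ h
      exact hap j (by omega) hpj.symm
    · exact hap m le_rfl (hY_elim r _ h).2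
  have hb_notAY : ∀ r, b ∉ A r ∪ Y r := by
    intro r h
    rcases Finset.mem_union.mp h with h | h
    · obtain ⟨j, hj, _, hpj⟩ := hA_elim r _ h
      exact hbp j (by omega) hpj.symm
    · exact hbp m le_rfl (hY_elim r _ h).2
  have hc_notAY : ∀ r, c ∉ A r ∪ Y r := by
    intro r h
    rcases Finset.mem_union.mp h with h | h
    · obtain ⟨j, hj, _, hpj⟩ := hA_elim r _ h
      exact hcp j (by omega) hpj.symm
    · exact hcp m le_rfl (hY_elim r _ h).2
  -- membership of a, b, c in the four types
  have haT1 : a ∈ T1 := by rw [hT1]; exact Finset.mem_insert_self _ _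
  have haT1' : a ∉ T1' := by
    rw [hT1']
    intro h
    rcases Finset.mem_insert.mp h with h | h
    · exact hac2 h
    · exact ha_notAY 0 h
  have haT2 : a ∉ T2 := by
    rw [hT2]
    intro h
    rcases Finset.mem_insert.mp h with h | h
    · exact hab2 h
    · exact ha_notAY 1 h
  have haT3 : a ∈ T3 := by rw [hT3]; exact Finset.mem_insert_self _ _
  have hbT1 : b ∉ T1 := by
    rw [hT1]
    intro h
    rcases Finset.mem_insert.mp h with h | h
    · exact hab2 h.symm
    · exact hb_notAY 0 h
  have hbT1' : b ∉ T1' := by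
    rw [hT1']
    intro h
    rcases Finset.mem_insert.mp h with h | h
    · exact hbc2 h
    · exact hb_notAY 0 h
  have hbT2 : b ∈ T2 := by rw [hT2]; exact Finset.mem_insert_self _ _
  have hbT3 : b ∉ T3 := by
    rw [hT3]
    intro h
    rcases Finset.mem_insert.mp h with h | h
    · exact hab2 h.symm
    · rcases Finset.mem_insert.mp h with h | h
      · exact hbc2 h
      · exact hb_notAY 2 h
  have hcT1 : c ∉ T1 := by
    rw [hT1]
    intro h
    rcases Finset.mem_insert.mp h with h | h
    · exact hac2 h.symm
    · exact hc_notAY 0 h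
  have hcT1' : c ∈ T1' := by rw [hT1']; exact Finset.mem_insert_self _ _
  have hcT2 : c ∉ T2 := by
    rw [hT2]
    intro h
    rcases Finset.mem_insert.mp h with h | h
    · exact hbc2 h.symm
    · exact hc_notAY 1 h
  have hcT3 : c ∈ T3 := by
    rw [hT3]
    exact Finset.mem_insert_of_mem (Finset.mem_insert_self _ _)
  -- membership of path vertices in the four types
  have hpT1 : ∀ j, j < m → (p j ∈ T1 ↔ j % 3 = 0) := by
    intro j hj
    rw [hT1]
    constructor
    · intro h
      rcases Finset.mem_insert.mp h with h | h
      · exact absurd h (fun h' => hap j (by omega) h'.symm)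
      · rcases Finset.mem_union.mp h with h | h
        · exact (hpj_A_iff 0 j hj).mp h
        · exact absurd h (hpj_notY 0 j hj)
    · intro h
      exact Finset.mem_insert_of_mem (Finset.mem_union_left _ ((hpj_A_iff 0 j hj).mpr h))
  have hpT1' : ∀ j, j < m → (p j ∈ T1' ↔ j % 3 = 0) := by
    intro j hj
    rw [hT1']
    constructor
    · intro h
      rcases Finset.mem_insert.mp h with h | h
      · exact absurd h (fun h' => hcp j (by omega) h'.symm)
      · rcases Finset.mem_union.mp h with h | h
        · exact (hpj_A_iff 0 j hj).mp h
        · exact absurd h (hpj_notY 0 j hj)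
    · intro h
      exact Finset.mem_insert_of_mem (Finset.mem_union_left _ ((hpj_A_iff 0 j hj).mpr h))
  have hpT2 : ∀ j, j < m → (p j ∈ T2 ↔ j % 3 = 1) := by
    intro j hj
    rw [hT2]
    constructor
    · intro h
      rcases Finset.mem_insert.mp h with h | h
      · exact absurd h (fun h' => hbp j (by omega) h'.symm)
      · rcases Finset.mem_union.mp h with h | h
        · exact (hpj_A_iff 1 j hj).mp h
        · exact absurd h (hpj_notY 1 j hj)
    · intro h
      exact Finset.mem_insert_of_mem (Finset.mem_union_left _ ((hpj_A_iff 1 j hj).mpr h))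
  have hpT3 : ∀ j, j < m → (p j ∈ T3 ↔ j % 3 = 2) := by
    intro j hj
    rw [hT3]
    constructor
    · intro h
      rcases Finset.mem_insert.mp h with h | h
      · exact absurd h (fun h' => hap j (by omega) h'.symm)
      · rcases Finset.mem_insert.mp h with h | h
        · exact absurd h (fun h' => hcp j (by omega) h'.symm)
        · rcases Finset.mem_union.mp h with h | h
          · exact (hpj_A_iff 2 j hj).mp h
          · exact absurd h (hpj_notY 2 j hj)
    · intro h
      exact Finset.mem_insert_of_mem (Finset.mem_insert_of_mem
        (Finset.mem_union_left _ ((hpj_A_iff 2 j hj).mpr h)))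
  -- membership of p m in types
  have hpmT1 : m % 3 ≠ 0 → p m ∉ T1 := by
    intro h0 h
    rw [hT1] at h
    rcases Finset.mem_insert.mp h with h | h
    · exact hap m le_rfl h.symm
    · rcases Finset.mem_union.mp h with h | h
      · exact hpm_notA 0 h
      · exact h0 (hY_elim 0 _ h).1
  have hpmT1' : m % 3 ≠ 0 → p m ∉ T1' := by
    intro h0 h
    rw [hT1'] at h
    rcases Finset.mem_insert.mp h with h | h
    · exact hcp m le_rfl h.symm
    · rcases Finset.mem_union.mp h with h | h
      · exact hpm_notA 0 h
      · exact h0 (hY_elim 0 _ h).1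
  have hpmT2 : m % 3 ≠ 1 → p m ∉ T2 := by
    intro h0 h
    rw [hT2] at h
    rcases Finset.mem_insert.mp h with h | h
    · exact hbp m le_rfl h.symm
    · rcases Finset.mem_union.mp h with h | h
      · exact hpm_notA 1 h
      · exact h0 (hY_elim 1 _ h).1
  have hpmT3 : m % 3 ≠ 2 → p m ∉ T3 := by
    intro h0 h
    rw [hT3] at h
    rcases Finset.mem_insert.mp h with h | h
    · exact hap m le_rfl h.symm
    · rcases Finset.mem_insert.mp h with h | h
      · exact hcp m le_rfl h.symm
      · rcases Finset.mem_union.mp h with h | h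
        · exact hpm_notA 2 h
        · exact h0 (hY_elim 2 _ h).1
  -- the tail of ts beyond position k avoids p m
  have hts_drop : ∀ T ∈ ts.drop k, p m ∉ T := by
    intro T hT
    rw [hts] at hT
    split_ifs at hT with h0 h1
    · rw [List.drop_append,
        List.drop_eq_nil_of_le (by rw [hts0len]; omega), List.nil_append] at hT
      have hT2' := List.mem_of_mem_drop hT
      rw [List.mem_append, hts1, hts2] at hT2'
      rcases hT2' with h | h
      · rw [(List.mem_replicate.mp h).2]; exact hpmT2 (by omega)
      · rw [(List.mem_replicate.mp h).2]; exact hpmT3 (by omega)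
    · rw [List.drop_append,
        List.drop_eq_nil_of_le (by rw [hts1len]), List.nil_append] at hT
      have hT2' := List.mem_of_mem_drop hT
      rw [List.mem_append, hts0, hts2] at hT2'
      rcases hT2' with h | h
      · rcases List.mem_cons.mp h with h | h
        · rw [h]; exact hpmT1 (by omega)
        · rw [List.mem_singleton.mp h]; exact hpmT1' (by omega)
      · rw [(List.mem_replicate.mp h).2]; exact hpmT3 (by omega)
    · have h2 : m % 3 = 2 := by omega
      rw [List.drop_append,
        List.drop_eq_nil_of_le (by rw [hts2len]; omega), List.nil_append] at hT
      have hT2' := List.mem_of_mem_drop hT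
      rw [List.mem_append, hts0, hts1] at hT2'
      rcases hT2' with h | h
      · rcases List.mem_cons.mp h with h | h
        · rw [h]; exact hpmT1 (by omega)
        · rw [List.mem_singleton.mp h]; exact hpmT1' (by omega)
      · rw [(List.mem_replicate.mp h).2]; exact hpmT2 (by omega)
  have hds_drop : ∀ D ∈ ds.drop k, p m ∉ D := by
    intro D hD
    rw [hds, List.drop_append,
      List.drop_eq_nil_of_le (by rw [hdsYlen]; exact hcnt (p m)), List.nil_append] at hD
    have h := List.mem_of_mem_drop hD
    rw [hdsN, Multiset.mem_toList, Multiset.mem_filter] at h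
    exact h.2
  -- counting over ts
  have hts_count : ∀ pr : Finset V → Bool,
      ts.countP pr = ([T1, T1'] : List (Finset V)).countP pr
        + (List.replicate k T2).countP pr + (List.replicate (k - 1) T3).countP pr := by
    intro pr
    rw [hts]
    split_ifs <;> rw [hts0, hts1, hts2] <;>
      simp only [List.countP_append] <;> omega
  have hds_count : ∀ v : V,
      ds.countP (fun D => v ∈ D) = Multiset.countP (fun D => v ∈ D) 𝒟 := by
    intro v
    have h1 : ∀ (s : Multiset (Finset V)),
        s.toList.countP (fun D => decide (v ∈ D)) = Multiset.countP (fun D => v ∈ D) s := by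
      intro s
      rw [← Multiset.coe_countP, Multiset.coe_toList]
    rw [hds, List.countP_append, hdsY, hdsN, h1, h1, ← Multiset.countP_add,
      Multiset.filter_add_not]
  -- assemble
  refine ⟨↑(List.zipWith (· ∪ ·) ts ds), ?_, ?_, ?_⟩
  · rw [Multiset.coe_card, List.length_zipWith, htslen, hdslen]
    simp
  · intro S hS
    rw [Multiset.mem_coe] at hS
    obtain ⟨T, hT, D, hD, rfl⟩ := mem_zipWith_union hS
    intro v hv
    by_cases hvW : v ∈ W
    · have hvD : v ∉ D := fun h => hv (Finset.mem_union_right _ h)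
      obtain ⟨u, hu, ha'⟩ := hdomW D (hds_mem D hD) v hvW hvD
      exact ⟨u, Finset.mem_union_right _ hu, ha'⟩
    · have hv' : v = a ∨ v = b ∨ v = c ∨ ∃ j, j < m ∧ v = p j := by
        rcases hcover v with h | h | h | h | ⟨j, hjle, rfl⟩
        · exact absurd h hvW
        · exact Or.inl h
        · exact Or.inr (Or.inl h)
        · exact Or.inr (Or.inr (Or.inl h))
        · rcases Nat.lt_or_ge j m with h | h
          · exact Or.inr (Or.inr (Or.inr ⟨j, h, rfl⟩))
          · have hjm : j = m := by omega
            rw [hjm] at hvW ⊢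
            exact absurd hym hvW
      rcases dom_claim T hT v hv' with h | ⟨u, hu, ha'⟩
      · exact absurd (Finset.mem_union_left _ h) hv
      · exact ⟨u, Finset.mem_union_left _ hu, ha'⟩
  · intro v
    rw [Multiset.coe_countP]
    by_cases hvm : v = p m
    · subst hvm
      exact countP_zipWith_union_le_of_drop (p m) k ts ds hts_drop hds_drop
    by_cases hvW : v ∈ W
    · refine le_trans (countP_zipWith_union_le v ts ds) ?_
      have h0 : ts.countP (fun S => v ∈ S) = 0 := by
        rw [List.countP_eq_zero]
        intro T hT
        simp only [decide_eq_true_eq]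
        intro hvT
        rcases hts_mem T hT with rfl | rfl | rfl | rfl
        · rw [hT1] at hvT
          rcases Finset.mem_insert.mp hvT with h | h
          · exact haW (h ▸ hvW)
          · rcases Finset.mem_union.mp h with h | h
            · obtain ⟨j, hj, _, hpj⟩ := hA_elim 0 _ h
              exact hpW j hj (hpj ▸ hvW)
            · exact hvm (hY_elim 0 _ h).2
        · rw [hT1'] at hvT
          rcases Finset.mem_insert.mp hvT with h | h
          · exact hcW (h ▸ hvW)
          · rcases Finset.mem_union.mp h with h | h
            · obtain ⟨j, hj, _, hpj⟩ := hA_elim 0 _ h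
              exact hpW j hj (hpj ▸ hvW)
            · exact hvm (hY_elim 0 _ h).2
        · rw [hT2] at hvT
          rcases Finset.mem_insert.mp hvT with h | h
          · exact hbW (h ▸ hvW)
          · rcases Finset.mem_union.mp h with h | h
            · obtain ⟨j, hj, _, hpj⟩ := hA_elim 1 _ h
              exact hpW j hj (hpj ▸ hvW)
            · exact hvm (hY_elim 1 _ h).2
        · rw [hT3] at hvT
          rcases Finset.mem_insert.mp hvT with h | h
          · exact haW (h ▸ hvW)
          · rcases Finset.mem_insert.mp h with h | h
            · exact hcW (h ▸ hvW)
            · rcases Finset.mem_union.mp h with h | h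
              · obtain ⟨j, hj, _, hpj⟩ := hA_elim 2 _ h
                exact hpW j hj (hpj ▸ hvW)
              · exact hvm (hY_elim 2 _ h).2
      rw [h0, hds_count]
      have := hcnt v
      omega
    · refine le_trans (countP_zipWith_union_le v ts ds) ?_
      have h0 : ds.countP (fun D => v ∈ D) = 0 := by
        rw [List.countP_eq_zero]
        intro D hD
        simp only [decide_eq_true_eq]
        exact fun h => hvW (hsubW D (hds_mem D hD) v h)
      rw [h0, Nat.add_zero]
      have hv' : v = a ∨ v = b ∨ v = c ∨ ∃ j, j < m ∧ v = p j := by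
        rcases hcover v with h | h | h | h | ⟨j, hjle, rfl⟩
        · exact absurd h hvW
        · exact Or.inl h
        · exact Or.inr (Or.inl h)
        · exact Or.inr (Or.inr (Or.inl h))
        · rcases Nat.lt_or_ge j m with h | h
          · exact Or.inr (Or.inr (Or.inr ⟨j, h, rfl⟩))
          · exfalso
            have hjm : j = m := by omega
            rw [hjm] at hvW
            exact hvW hym
      rw [hts_count]
      rcases hv' with rfl | rfl | rfl | ⟨j, hj, rfl⟩
      · rw [countP_replicate', countP_replicate']
        simp [List.countP_cons, haT1, haT1', haT2, haT3]
        all_goals omega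
      · rw [countP_replicate', countP_replicate']
        simp [List.countP_cons, hbT1, hbT1', hbT2, hbT3]
        all_goals omega
      · rw [countP_replicate', countP_replicate']
        simp [List.countP_cons, hcT1, hcT1', hcT2, hcT3]
        all_goals omega
      · rw [countP_replicate', countP_replicate']
        have e1 := hpT1 j hj
        have e2 := hpT1' j hj
        have e3 := hpT2 j hj
        have e4 := hpT3 j hj
        have h3 : j % 3 = 0 ∨ j % 3 = 1 ∨ j % 3 = 2 := by omega
        rcases h3 with h | h | h <;>
          simp [List.countP_cons, e1, e2, e3, e4, h] <;> omega

private lemma getVert_inj {G : SimpleGraph V} {u w : V} {P : G.Walk u w} (hP : P.IsPath) :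
    ∀ i ≤ P.length, ∀ j ≤ P.length, P.getVert i = P.getVert j → i = j := by
  induction P with
  | nil => intro i hi j hj _; simp at hi hj; omega
  | @cons u v w h q ih =>
    rw [Walk.cons_isPath_iff] at hP
    intro i hi j hj hij
    match i, j with
    | 0, 0 => rfl
    | 0, j + 1 =>
      exfalso
      rw [Walk.getVert_zero, Walk.getVert_cons_succ] at hij
      exact hP.2 (Walk.mem_support_iff_exists_getVert.mpr ⟨j, hij.symm, by simpa using hj⟩)
    | i + 1, 0 =>
      exfalso
      rw [Walk.getVert_zero, Walk.getVert_cons_succ] at hij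
      exact hP.2 (Walk.mem_support_iff_exists_getVert.mpr ⟨i, hij, by simpa using hi⟩)
    | i + 1, j + 1 =>
      rw [Walk.getVert_cons_succ, Walk.getVert_cons_succ] at hij
      have := ih hP.1 i (by simpa using hi) j (by simpa using hj) hij
      omega



end Helpers

/-- If `G` is a `(C₄, H)`-dumbbell and the plate `H` admits a `(2k+1, k)`-configuration
with `k ≥ 3`, then so does `G`. -/
theorem stmt_11 {V : Type*} [Fintype V] [DecidableEq V] (G : SimpleGraph V)
    (H₁ H₂ : G.Subgraph) (hd : IsDumbbell G H₁ H₂)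
    (h1 : Nonempty (H₁.coe ≃g cycleGraph 4))
    (k : ℕ) (hk : 3 ≤ k)
    (hH : ∃ 𝒟 : Multiset (Finset H₂.verts), IsConfig H₂.coe 𝒟 (2 * k + 1) k) :
    ∃ 𝒟' : Multiset (Finset V), IsConfig G 𝒟' (2 * k + 1) k := by
  classical
  obtain ⟨hsub, x, y, P, hP, -, htop, hI1, hI2, hdisj⟩ := hd
  obtain ⟨𝒟₀, hcard₀, hdom₀, hcnt₀⟩ := hH
  obtain ⟨e⟩ := h1
  have hxmem : x ∈ H₁.verts ∩ {v | v ∈ P.support} := by rw [hI1]; rfl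
  have hymem : y ∈ H₂.verts ∩ {v | v ∈ P.support} := by rw [hI2]; rfl
  set m := P.length with hm
  set vx : H₁.verts := ⟨x, hxmem.1⟩ with hvx
  set x' : Fin 4 := e vx with hx'
  set va : H₁.verts := e.symm (x' + 1) with hva
  set vb : H₁.verts := e.symm (x' + 2) with hvb
  set vc : H₁.verts := e.symm (x' + 3) with hvc
  have hcyc : ∀ u w : H₁.verts, (cycleGraph 4).Adj (e u) (e w) → G.Adj (u : V) (w : V) := by
    intro u w h
    rw [Iso.map_adj_iff] at h
    rw [Subgraph.coe_adj] at h
    exact h.adj_sub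
  have h1' : e va = x' + 1 := by rw [hva, RelIso.apply_symm_apply]
  have h2' : e vb = x' + 2 := by rw [hvb, RelIso.apply_symm_apply]
  have h3' : e vc = x' + 3 := by rw [hvc, RelIso.apply_symm_apply]
  have hx0 : ((e.symm (x' + 0) : H₁.verts) : V) = x := by
    rw [add_zero, hx', RelIso.symm_apply_apply]
  have hne : ∀ (i j : Fin 4), i ≠ j →
      ((e.symm (x' + i) : H₁.verts) : V) ≠ ((e.symm (x' + j) : H₁.verts) : V) := by
    intro i j hij h
    apply hij
    have h2 : (e.symm (x' + i) : H₁.verts) = e.symm (x' + j) := Subtype.ext h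
    have h3 := congrArg e h2
    rw [RelIso.apply_symm_apply, RelIso.apply_symm_apply] at h3
    exact add_left_cancel h3
  have hax : (va : V) ≠ x := by
    have := hne 1 0 (by decide)
    rwa [← hva, hx0] at this
  have hbx : (vb : V) ≠ x := by
    have := hne 2 0 (by decide)
    rwa [← hvb, hx0] at this
  have hcx : (vc : V) ≠ x := by
    have := hne 3 0 (by decide)
    rwa [← hvc, hx0] at this
  have hab2 : (va : V) ≠ (vb : V) := by
    have := hne 1 2 (by decide); rwa [← hva, ← hvb] at this
  have hac2 : (va : V) ≠ (vc : V) := by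
    have := hne 1 3 (by decide); rwa [← hva, ← hvc] at this
  have hbc2 : (vb : V) ≠ (vc : V) := by
    have := hne 2 3 (by decide); rwa [← hvb, ← hvc] at this
  -- cover of H₁
  have hH1cover : ∀ v, v ∈ H₁.verts → v = x ∨ v = ↑va ∨ v = ↑vb ∨ v = ↑vc := by
    intro v hv
    obtain ⟨d, hd⟩ : ∃ d : Fin 4, d = e ⟨v, hv⟩ - x' := ⟨_, rfl⟩
    have hsum : e ⟨v, hv⟩ = x' + d := by rw [hd]; abel
    have hv' : (⟨v, hv⟩ : H₁.verts) = e.symm (x' + d) := by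
      rw [← hsum, RelIso.symm_apply_apply]
    have hvval : v = ((e.symm (x' + d) : H₁.verts) : V) := congrArg Subtype.val hv'
    have hd4 : d = 0 ∨ d = 1 ∨ d = 2 ∨ d = 3 := by
      clear hvval hv' hsum hd; revert d; decide
    rcases hd4 with rfl | rfl | rfl | rfl
    · exact Or.inl (by rw [hvval, hx0])
    · exact Or.inr (Or.inl (by rw [hvval, ← hva]))
    · exact Or.inr (Or.inr (Or.inl (by rw [hvval, ← hvb])))
    · exact Or.inr (Or.inr (Or.inr (by rw [hvval, ← hvc])))
  -- path facts
  have pinj : ∀ i ≤ m, ∀ j ≤ m, P.getVert i = P.getVert j → i = j := getVert_inj hP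
  have hp0 : P.getVert 0 = x := P.getVert_zero
  have hpm : P.getVert m = y := P.getVert_length
  have hsupp : ∀ j, j ≤ m → P.getVert j ∈ P.support := fun j hj =>
    Walk.mem_support_iff_exists_getVert.mpr ⟨j, rfl, hj⟩
  have hnotsupp : ∀ w : H₁.verts, (w : V) ≠ x → (w : V) ∉ P.support := by
    intro w hw hmem
    have h : (w : V) ∈ H₁.verts ∩ {v | v ∈ P.support} := ⟨w.2, hmem⟩
    rw [hI1] at h
    exact hw h
  have hap : ∀ j ≤ m, (va : V) ≠ P.getVert j := fun j hj h =>
    hnotsupp va hax (h ▸ hsupp j hj)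
  have hbp : ∀ j ≤ m, (vb : V) ≠ P.getVert j := fun j hj h =>
    hnotsupp vb hbx (h ▸ hsupp j hj)
  have hcp : ∀ j ≤ m, (vc : V) ≠ P.getVert j := fun j hj h =>
    hnotsupp vc hcx (h ▸ hsupp j hj)
  -- cover of all vertices
  have hcover : ∀ v : V, v ∈ H₂.verts ∨ v = ↑va ∨ v = ↑vb ∨ v = ↑vc ∨
      ∃ j ≤ m, v = P.getVert j := by
    intro v
    have hvv : v ∈ (H₁.verts ∪ H₂.verts) ∪ P.toSubgraph.verts := by
      have h := congrArg Subgraph.verts htop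
      rw [Subgraph.verts_sup, Subgraph.verts_sup, Subgraph.verts_top] at h
      rw [h]
      trivial
    simp only [Set.mem_union] at hvv
    rcases hvv with (hv | hv) | hv
    · rcases hH1cover v hv with rfl | h | h | h
      · exact Or.inr (Or.inr (Or.inr (Or.inr ⟨0, Nat.zero_le _, hp0.symm⟩)))
      · exact Or.inr (Or.inl h)
      · exact Or.inr (Or.inr (Or.inl h))
      · exact Or.inr (Or.inr (Or.inr (Or.inl h)))
    · exact Or.inl hv
    · rw [Walk.mem_verts_toSubgraph] at hv
      obtain ⟨n, hn, hnle⟩ := Walk.mem_support_iff_exists_getVert.mp hv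
      exact Or.inr (Or.inr (Or.inr (Or.inr ⟨n, hnle, hn.symm⟩)))
  -- the plate vertices avoid H₂
  have havoid : ∀ w : H₁.verts, (w : V) ≠ x → (w : V) ∉ H₂.verts := by
    intro w hw h
    by_cases hxy : x = y
    · have hx2 : x ∈ H₁.verts ∩ H₂.verts := ⟨hxmem.1, hxy ▸ hymem.1⟩
      have ha2 : (w : V) ∈ H₁.verts ∩ H₂.verts := ⟨w.2, h⟩
      exact hw (hsub ha2 hx2)
    · exact (Set.disjoint_left.mp (hdisj hxy)) w.2 h
  have hpW : ∀ j, j < m → P.getVert j ∉ H₂.verts := by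
    intro j hj h
    have h2 : P.getVert j ∈ H₂.verts ∩ {v | v ∈ P.support} := ⟨h, hsupp j (le_of_lt hj)⟩
    rw [hI2] at h2
    have h3 : P.getVert j = P.getVert m := by rw [hpm]; exact h2
    have := pinj j (le_of_lt hj) m le_rfl h3
    omega
  -- adjacencies
  have adjxa : G.Adj (P.getVert 0) (va : V) := by
    rw [hp0]
    refine hcyc vx va ?_
    rw [h1', ← hx', cycleGraph_adj]
    right
    exact add_sub_cancel_left x' 1
  have adjab : G.Adj (va : V) (vb : V) := by
    refine hcyc va vb ?_
    rw [h1', h2', cycleGraph_adj]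
    right
    open Fin.CommRing in ring_nf
  have adjbc : G.Adj (vb : V) (vc : V) := by
    refine hcyc vb vc ?_
    rw [h2', h3', cycleGraph_adj]
    right
    open Fin.CommRing in ring_nf
  have adjcx : G.Adj (vc : V) (P.getVert 0) := by
    rw [hp0]
    refine hcyc vc vx ?_
    rw [h3', ← hx', cycleGraph_adj]
    right
    have h : x' - (x' + 3) = -3 := by open Fin.CommRing in ring
    rw [h]
    decide
  -- the lifted multiset
  set 𝒟 : Multiset (Finset V) := 𝒟₀.map (fun D => D.image Subtype.val) with h𝒟
  have hmem𝒟 : ∀ D ∈ 𝒟, ∃ D₀ ∈ 𝒟₀, D = D₀.image Subtype.val := by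
    intro D hD
    rw [h𝒟, Multiset.mem_map] at hD
    obtain ⟨D₀, h₀, rfl⟩ := hD
    exact ⟨D₀, h₀, rfl⟩
  have hsubW : ∀ D ∈ 𝒟, ∀ v ∈ D, v ∈ H₂.verts := by
    intro D hD v hv
    obtain ⟨D₀, h₀, rfl⟩ := hmem𝒟 D hD
    obtain ⟨u, _, rfl⟩ := Finset.mem_image.mp hv
    exact u.2
  have hdomW : ∀ D ∈ 𝒟, ∀ v ∈ H₂.verts, v ∉ D → ∃ u ∈ D, G.Adj v u := by
    intro D hD v hv hvD
    obtain ⟨D₀, h₀, rfl⟩ := hmem𝒟 D hD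
    have hv0 : (⟨v, hv⟩ : H₂.verts) ∉ D₀ := by
      intro h
      exact hvD (Finset.mem_image.mpr ⟨⟨v, hv⟩, h, rfl⟩)
    obtain ⟨u, hu, hadj⟩ := hdom₀ D₀ h₀ ⟨v, hv⟩ hv0
    rw [Subgraph.coe_adj] at hadj
    exact ⟨u, Finset.mem_image.mpr ⟨u, hu, rfl⟩, hadj.adj_sub⟩
  have hcard : Multiset.card 𝒟 = 2 * k + 1 := by
    rw [h𝒟, Multiset.card_map, hcard₀]
  have hcnt : ∀ v : V, 𝒟.countP (fun D => v ∈ D) ≤ k := by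
    intro v
    by_cases hv : v ∈ H₂.verts
    · rw [h𝒟, Multiset.countP_map, ← Multiset.countP_eq_card_filter]
      have h := hcnt₀ ⟨v, hv⟩
      refine le_trans (le_of_eq (Multiset.countP_congr rfl ?_)) h
      intro D₀ _
      simp only [eq_iff_iff]
      constructor
      · intro hmem
        obtain ⟨u, hu, hval⟩ := Finset.mem_image.mp hmem
        have : u = ⟨v, hv⟩ := Subtype.ext hval
        rwa [← this]
      · intro hmem
        exact Finset.mem_image.mpr ⟨⟨v, hv⟩, hmem, rfl⟩
    · have h0 : 𝒟.countP (fun D => v ∈ D) = 0 := by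
        rw [Multiset.countP_eq_zero]
        intro D hD hvD
        exact hv (hsubW D hD v hvD)
      omega
  exact aux_construct G k hk H₂.verts 𝒟 hcard hdomW hsubW hcnt m (fun j => P.getVert j)
    (va : V) (vb : V) (vc : V) hcover adjxa adjab adjbc adjcx
    (fun j hj => P.adj_getVert_succ hj) pinj
    (havoid va hax) (havoid vb hbx) (havoid vc hcx) hpW (by simpa [hpm] using hymem.1)
    hap hbp hcp hab2 hac2 hbc2
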